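/- Setting R = ker D = C[z, p] with p = xz − (1/2)y², one has R[x] = C[z, x, y²] as subalgebras of C[x,y,z], and there is a direct sum decomposition of C-vector spaces C[x,y,z] = R[x] ⊕ y·R[x]. -/

import Mathlib

open MvPolynomial

noncomputable section

/-- The polynomial ring ℂ[x,y,z], with x = X 0, y = X 1, z = X 2. -/
abbrev R3 : Type := MvPolynomial (Fin 3) ℂ

/-- The derivation D = z·∂/∂y + y·∂/∂x, i.e. D x = y, D y = z, D z = 0. -/
def D : Derivation ℂ R3 R3 := mkDerivation ℂ ![X 1, X 2, 0]

/-- p = xz - (1/2)y² -/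
def p : R3 := X 0 * X 2 - C (1/2) * X 1 ^ 2

/-- The exponential automorphism exp(qD) of ℂ³ (for q ∈ ker D), given by its
closed formula: since D q = 0, (qD)x = qy, (qD)²x = q²z, (qD)³x = 0, so
exp(qD) = (x + qy + q²z/2, y + qz, z). -/
def expMap (q : R3) : (Fin 3 → ℂ) → (Fin 3 → ℂ) :=
  fun a => ![a 0 + eval a q * a 1 + eval a q ^ 2 * a 2 / 2,
             a 1 + eval a q * a 2, a 2]

/-- A map ℂ³ → ℂ³ given coordinatewise by polynomials. -/
def IsPolyMap (F : (Fin 3 → ℂ) → (Fin 3 → ℂ)) : Prop :=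
  ∃ f : Fin 3 → R3, ∀ a i, F a i = eval a (f i)

/-- A polynomial automorphism of ℂ³: a polynomial map with a polynomial inverse. -/
def IsPolyAut (F : (Fin 3 → ℂ) → (Fin 3 → ℂ)) : Prop :=
  IsPolyMap F ∧ ∃ G, IsPolyMap G ∧ F ∘ G = id ∧ G ∘ F = id

/-- h' = exp(D) : (x,y,z) ↦ (x + y + z/2, y + z, z). -/
def h'map : (Fin 3 → ℂ) → (Fin 3 → ℂ) :=
  fun a => ![a 0 + a 1 + a 2 / 2, a 1 + a 2, a 2]

namespace Stmt3Aux

/-- the involution y ↦ -y -/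
def sig : R3 →ₐ[ℂ] R3 := aeval ![X 0, -X 1, X 2]

@[simp] lemma sig_X0 : sig (X 0) = X 0 := by simp [sig]
@[simp] lemma sig_X1 : sig (X 1) = - X 1 := by simp [sig]
@[simp] lemma sig_X2 : sig (X 2) = X 2 := by simp [sig]

def A : Subalgebra ℂ R3 := Algebra.adjoin ℂ ({X 2, X 0, X 1 ^ 2} : Set R3)

lemma sig_fix {g : R3} (hg : g ∈ A) : sig g = g := by
  induction hg using Algebra.adjoin_induction with
  | mem x hx =>
    rcases hx with rfl | rfl | rfl
    · simp
    · simp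
    · simp
  | algebraMap r => exact sig.commutes r
  | add x y hx hy ihx ihy => rw [map_add, ihx, ihy]
  | mul x y hx hy ihx ihy => rw [map_mul, ihx, ihy]

lemma decomp (f : R3) : ∃ a b : R3, a ∈ A ∧ b ∈ A ∧ f = a + X 1 * b := by
  induction f using MvPolynomial.induction_on with
  | C c =>
    exact ⟨C c, 0, by simpa [algebraMap_eq] using A.algebraMap_mem c, A.zero_mem, by ring⟩
  | add p q hp hq =>
    obtain ⟨a, b, ha, hb, rfl⟩ := hp
    obtain ⟨a', b', ha', hb', rfl⟩ := hq
    exact ⟨a + a', b + b', A.add_mem ha ha', A.add_mem hb hb', by ring⟩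
  | mul_X q n hq =>
    obtain ⟨a, b, ha, hb, rfl⟩ := hq
    have h0 : (X 0 : R3) ∈ A := Algebra.subset_adjoin (by simp)
    have h2 : (X 2 : R3) ∈ A := Algebra.subset_adjoin (by simp)
    have h11 : (X 1 ^ 2 : R3) ∈ A := Algebra.subset_adjoin (by simp)
    fin_cases n
    · exact ⟨a * X 0, b * X 0, A.mul_mem ha h0, A.mul_mem hb h0,
        by show (a + X 1 * b) * X 0 = a * X 0 + X 1 * (b * X 0); ring⟩
    · exact ⟨X 1 ^ 2 * b, a, A.mul_mem h11 hb, ha,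
        by show (a + X 1 * b) * X 1 = X 1 ^ 2 * b + X 1 * a; ring⟩
    · exact ⟨a * X 2, b * X 2, A.mul_mem ha h2, A.mul_mem hb h2,
        by show (a + X 1 * b) * X 2 = a * X 2 + X 1 * (b * X 2); ring⟩

lemma zero_decomp {a b : R3} (ha : a ∈ A) (hb : b ∈ A) (h : a + X 1 * b = 0) :
    a = 0 ∧ b = 0 := by
  have h2 : a - X 1 * b = 0 := by
    have := congrArg sig h
    rw [map_add, map_mul, sig_X1, sig_fix ha, sig_fix hb, map_zero] at this
    linear_combination this
  have h2a : (2 : R3) * a = 0 := by linear_combination h + h2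
  have ha0 : a = 0 := by
    rcases mul_eq_zero.mp h2a with h' | h'
    · exact absurd h' two_ne_zero
    · exact h'
  have hb0 : (X 1 : R3) * b = 0 := by linear_combination h - ha0
  rcases mul_eq_zero.mp hb0 with h' | h'
  · exact absurd h' (X_ne_zero 1)
  · exact ⟨ha0, h'⟩

lemma aeval_eq_eval (x : Fin 3 → ℂ) (f : R3) : aeval x f = eval x f := by
  rw [aeval_def, eval, Algebra.algebraMap_self]
  rfl

lemma flow_const (D : Derivation ℂ R3 R3)
    (hx : D (X 0) = X 1) (hy : D (X 1) = X 2) (hz : D (X 2) = 0)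
    {f : R3} (hf : D f = 0) (v : Fin 3 → ℂ) (t : ℂ) :
    eval ![v 0 + t * v 1 + t ^ 2 * v 2 / 2, v 1 + t * v 2, v 2] f = eval v f := by
  set g : Fin 3 → Polynomial ℂ :=
    ![Polynomial.C (v 0) + Polynomial.C (v 1) * Polynomial.X
        + Polynomial.C (v 2 / 2) * Polynomial.X ^ 2,
      Polynomial.C (v 1) + Polynomial.C (v 2) * Polynomial.X,
      Polynomial.C (v 2)] with hg
  have key : ∀ q : R3, Polynomial.derivative (aeval g q) = aeval g (D q) := by
    intro q
    induction q using MvPolynomial.induction_on with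
    | C c =>
      have hDC : D (C c) = 0 := by
        rw [← algebraMap_eq]; exact D.map_algebraMap c
      rw [hDC, map_zero, aeval_C]
      simp
    | add p q hp hq => simp only [map_add, hp, hq]
    | mul_X q n hq =>
      have hgen : Polynomial.derivative (aeval g (X n : R3)) = aeval g (D (X n)) := by
        fin_cases n
        · show Polynomial.derivative (aeval g (X 0 : R3)) = aeval g (D (X 0))
          rw [hx]; simp [hg]
          rw [show (1 + 1 : Polynomial ℂ) = Polynomial.C 2 from by rw [map_ofNat]; norm_num, ← mul_assoc, ← Polynomial.C_mul, show v 2 / 2 * 2 = v 2 from by ring]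
        · show Polynomial.derivative (aeval g (X 1 : R3)) = aeval g (D (X 1))
          rw [hy]; simp [hg]
        · show Polynomial.derivative (aeval g (X 2 : R3)) = aeval g (D (X 2))
          rw [hz]; simp [hg]
      rw [map_mul, Polynomial.derivative_mul, hq, hgen, D.leibniz, map_add, smul_eq_mul,
        smul_eq_mul, map_mul, map_mul]
      ring
  have hconst : aeval g f = Polynomial.C ((aeval g f).coeff 0) :=
    Polynomial.eq_C_of_derivative_eq_zero (by rw [key, hf, map_zero])
  have heval : ∀ s : ℂ, Polynomial.eval s (aeval g f) = eval (fun i => Polynomial.eval s (g i)) f := by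
    intro s
    have h2 : ∀ q : Polynomial ℂ, (Polynomial.aeval s : Polynomial ℂ →ₐ[ℂ] ℂ) q
        = Polynomial.eval s q := fun q => congrFun (Polynomial.coe_aeval_eq_eval s) q
    have h1 : (Polynomial.aeval s : Polynomial ℂ →ₐ[ℂ] ℂ) (aeval g f)
        = aeval (fun i => (Polynomial.aeval s : Polynomial ℂ →ₐ[ℂ] ℂ) (g i)) f :=
      comp_aeval_apply (f := g) _ f
    have hw : (fun i => (Polynomial.aeval s : Polynomial ℂ →ₐ[ℂ] ℂ) (g i))
        = fun i => Polynomial.eval s (g i) := funext fun i => h2 (g i)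
    rw [← h2, h1, hw, aeval_eq_eval]
  have e1 : (fun i => Polynomial.eval t (g i)) = ![v 0 + t * v 1 + t ^ 2 * v 2 / 2, v 1 + t * v 2, v 2] := by
    funext i; fin_cases i <;> simp [hg] <;> ring
  have e0 : (fun i => Polynomial.eval (0 : ℂ) (g i)) = v := by
    funext i; fin_cases i <;> simp [hg]
  have h1 := heval t
  have h0 := heval 0
  rw [hconst, Polynomial.eval_C] at h1 h0
  rw [e1] at h1
  rw [e0] at h0
  rw [← h1, h0]

lemma ker_fixed (D : Derivation ℂ R3 R3)
    (hx : D (X 0) = X 1) (hy : D (X 1) = X 2) (hz : D (X 2) = 0)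
    {f : R3} (hf : D f = 0) : sig f = f := by
  have hvz : ∀ v : Fin 3 → ℂ, v 2 ≠ 0 → eval v (sig f) = eval v f := by
    intro v hv
    have hs : eval v (sig f) = eval ![v 0, -(v 1), v 2] f := by
      rw [sig, ← aeval_eq_eval, comp_aeval_apply]
      have hw : (fun i => aeval v ((![X 0, -X 1, X 2] : Fin 3 → R3) i)) = ![v 0, -(v 1), v 2] := by
        funext i; fin_cases i <;> simp [aeval_eq_eval]
      rw [hw, aeval_eq_eval]
    have hflow := flow_const D hx hy hz hf v (-2 * v 1 / v 2)
    have hw2 : ![v 0 + -2 * v 1 / v 2 * v 1 + (-2 * v 1 / v 2) ^ 2 * v 2 / 2,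
        v 1 + -2 * v 1 / v 2 * v 2, v 2] = ![v 0, -(v 1), v 2] := by
      funext i; fin_cases i
      · show v 0 + -2 * v 1 / v 2 * v 1 + (-2 * v 1 / v 2) ^ 2 * v 2 / 2 = v 0
        field_simp; ring
      · show v 1 + -2 * v 1 / v 2 * v 2 = -(v 1)
        field_simp; ring
      · rfl
    rw [hw2] at hflow
    rw [hs, hflow]
  have hmul : (sig f - f) * X 2 = 0 := by
    apply MvPolynomial.funext (q := 0)
    intro x
    rw [map_mul, map_sub, map_zero, eval_X]
    by_cases hx2 : x 2 = 0
    · rw [hx2, mul_zero]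
    · rw [hvz x hx2, sub_self, zero_mul]
  rcases mul_eq_zero.mp hmul with h' | h'
  · exact sub_eq_zero.mp h'
  · exact absurd h' (X_ne_zero 2)

end Stmt3Aux

/-- R[x] = ℂ[z, x, y²] where R = ker D, and
ℂ[x,y,z] = R[x] ⊕ y·R[x] as ℂ-vector spaces (unique decomposition). -/



theorem stmt_3 (D : Derivation ℂ R3 R3)
    (hx : D (X 0) = X 1) (hy : D (X 1) = X 2) (hz : D (X 2) = 0) :
    Algebra.adjoin ℂ ({f : R3 | D f = 0} ∪ {X 0}) =
      Algebra.adjoin ℂ ({X 2, X 0, X 1 ^ 2} : Set R3) ∧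
    ∀ f : R3, ∃! ab : R3 × R3,
      ab.1 ∈ Algebra.adjoin ℂ ({f : R3 | D f = 0} ∪ {X 0}) ∧
      ab.2 ∈ Algebra.adjoin ℂ ({f : R3 | D f = 0} ∪ {X 0}) ∧
      f = ab.1 + X 1 * ab.2 := by
  have hX2ker : (X 2 : R3) ∈ {f : R3 | D f = 0} ∪ {X 0} :=
    Set.mem_union_left _ hz
  have hX0mem : (X 0 : R3) ∈ {f : R3 | D f = 0} ∪ {X 0} :=
    Set.mem_union_right _ rfl
  have hle1 : Algebra.adjoin ℂ ({X 2, X 0, X 1 ^ 2} : Set R3) ≤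
      Algebra.adjoin ℂ ({f : R3 | D f = 0} ∪ {X 0}) := by
    apply Algebra.adjoin_le
    intro w hw
    simp only [Set.mem_insert_iff, Set.mem_singleton_iff] at hw
    rcases hw with rfl | rfl | rfl
    · exact Algebra.subset_adjoin hX2ker
    · exact Algebra.subset_adjoin hX0mem
    · have hC : D (C (1/2 : ℂ)) = 0 := by
        rw [← algebraMap_eq]; exact D.map_algebraMap _
      have hhalf : (C (1/2 : ℂ) : R3) * 2 = 1 := by
        rw [← map_ofNat (C : ℂ →+* R3) 2, ← C_mul]; norm_num
      have hp : D (X 0 * X 2 - C (1/2) * X 1 ^ 2) = 0 := by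
        rw [map_sub, D.leibniz, pow_two, D.leibniz, D.leibniz, hx, hy, hz, hC]
        simp only [smul_eq_mul]
        linear_combination (-(X 2 : R3) * X 1) * hhalf
      have hpmem : (X 0 * X 2 - C (1/2) * X 1 ^ 2 : R3) ∈
          Algebra.adjoin ℂ ({f : R3 | D f = 0} ∪ {X 0}) :=
        Algebra.subset_adjoin (Set.mem_union_left _ hp)
      have hC2 : (C 2 : R3) ∈ Algebra.adjoin ℂ ({f : R3 | D f = 0} ∪ {X 0}) := by
        rw [← algebraMap_eq]
        exact Subalgebra.algebraMap_mem _ 2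
      have h2half : (C 2 : R3) * C (1/2) = 1 := by
        rw [← C_mul]; norm_num
      have hrw : (X 1 : R3) ^ 2 =
          C 2 * (X 0 * X 2) - C 2 * (X 0 * X 2 - C (1/2) * X 1 ^ 2) := by
        linear_combination (-(X 1 : R3) ^ 2) * h2half
      rw [hrw]
      exact sub_mem
        (mul_mem hC2 (mul_mem (Algebra.subset_adjoin hX0mem)
          (Algebra.subset_adjoin hX2ker)))
        (mul_mem hC2 hpmem)
  have hle2 : Algebra.adjoin ℂ ({f : R3 | D f = 0} ∪ {X 0}) ≤
      Algebra.adjoin ℂ ({X 2, X 0, X 1 ^ 2} : Set R3) := by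
    apply Algebra.adjoin_le
    intro w hw
    simp only [Set.mem_union, Set.mem_singleton_iff, Set.mem_setOf_eq] at hw
    rcases hw with hker | rfl
    · obtain ⟨a, b, ha, hb, rfl⟩ := Stmt3Aux.decomp w
      have hfix := Stmt3Aux.ker_fixed D hx hy hz hker
      rw [map_add, map_mul, Stmt3Aux.sig_X1, Stmt3Aux.sig_fix ha,
        Stmt3Aux.sig_fix hb] at hfix
      have hb0 : b = 0 := by
        have h2b : (X 1 : R3) * (2 * b) = 0 := by linear_combination -hfix
        rcases mul_eq_zero.mp h2b with h | h
        · exact absurd h (X_ne_zero 1)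
        · rcases mul_eq_zero.mp h with h' | h'
          · exact absurd h' two_ne_zero
          · exact h'
      rw [hb0, mul_zero, add_zero]
      exact ha
    · exact Algebra.subset_adjoin (by simp)
  have hEq : Algebra.adjoin ℂ ({f : R3 | D f = 0} ∪ {X 0}) =
      Algebra.adjoin ℂ ({X 2, X 0, X 1 ^ 2} : Set R3) := le_antisymm hle2 hle1
  refine ⟨hEq, ?_⟩
  intro f
  obtain ⟨a, b, ha, hb, hab⟩ := Stmt3Aux.decomp f
  refine ⟨(a, b), ⟨by rw [hEq]; exact ha, by rw [hEq]; exact hb, hab⟩, ?_⟩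
  rintro ⟨a', b'⟩ ⟨ha', hb', hab'⟩
  simp only at ha' hb' hab'
  rw [hEq] at ha' hb'
  have h0 : (a' - a) + X 1 * (b' - b) = 0 := by linear_combination hab - hab'
  obtain ⟨hA0, hB0⟩ := Stmt3Aux.zero_decomp (sub_mem ha' ha) (sub_mem hb' hb) h0
  have e1 : a' = a := by linear_combination hA0
  have e2 : b' = b := by linear_combination hB0
  rw [e1, e2]
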